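/- Let f, g : ℕ → Ordinal be functions such that each f(n) and g(n) is a limit ordinal and cof(f(n)) = cof(g(n)) for every n. Consider the products ∏_{n<ω} f(n) and ∏_{n<ω} g(n) ordered by eventual dominance (h ≤* h' iff h(n) ≤ h'(n) for all but finitely many n). Then the two partial orders have cofinal subsets of the same minimal cardinality; i.e. the least cardinality of a cofinal subset of (∏ f(n), ≤*) equals the least cardinality of a cofinal subset of (∏ g(n), ≤*). -/

import Mathlib

/-- The set of functions below `F` pointwise: the product `∏_{n<ω} F n`. -/
def prodBelow (F : ℕ → Ordinal) : Set (ℕ → Ordinal) := {h | ∀ n, h n < F n}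

/-- Eventual dominance: `h ≤* h'` iff `h n ≤ h' n` for all but finitely many `n`. -/
def evLE (h h' : ℕ → Ordinal) : Prop := {n : ℕ | h' n < h n}.Finite

/-- `D` is a cofinal subset of `(∏ F n, ≤*)`. -/
def IsCofinalProd (F : ℕ → Ordinal) (D : Set (ℕ → Ordinal)) : Prop :=
  D ⊆ prodBelow F ∧ ∀ h ∈ prodBelow F, ∃ h' ∈ D, evLE h h'

/-- The least cardinality of a cofinal subset of `(∏ F n, ≤*)`. -/
noncomputable def cofinalityProd (F : ℕ → Ordinal) : Cardinal :=
  sInf {c : Cardinal | ∃ D : Set (ℕ → Ordinal), IsCofinalProd F D ∧ Cardinal.mk ↥D = c}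

/-- Abstract transfer lemma: given cofinal "scales" of the same length `κ` in `p` and `q`,
produce maps `π : q → p` and `ρ : p → q` such that `π` pushes anything above `ρ α` to
something above `α`. -/
theorem transfer_aux (p q κ : Ordinal) (a b : Ordinal → Ordinal)
    (ha_lt : ∀ i < κ, a i < p) (hb_lt : ∀ i < κ, b i < q)
    (ha_mono : ∀ i j, i < κ → j < κ → i ≤ j → a i ≤ a j)
    (hb_smono : ∀ i j, i < κ → j < κ → i < j → b i < b j)
    (ha_cof : ∀ α < p, ∃ i, i < κ ∧ α ≤ a i)
    (hb_cof : ∀ β < q, ∃ i, i < κ ∧ β ≤ b i) :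
    ∃ π ρ : Ordinal → Ordinal,
      (∀ β < q, π β < p) ∧ (∀ α < p, ρ α < q) ∧
      (∀ α < p, ∀ β < q, ρ α ≤ β → α ≤ π β) := by
  refine ⟨fun β => a (sInf {i | i < κ ∧ β ≤ b i}),
          fun α => b (sInf {i | i < κ ∧ α ≤ a i}), ?_, ?_, ?_⟩
  · intro β hβ
    exact ha_lt _ (csInf_mem (hb_cof β hβ)).1
  · intro α hα
    exact hb_lt _ (csInf_mem (ha_cof α hα)).1
  · intro α hα β hβ hle
    obtain ⟨hi0, hαA⟩ := csInf_mem (ha_cof α hα)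
    obtain ⟨hj0, hβB⟩ := csInf_mem (hb_cof β hβ)
    have hij : sInf {i | i < κ ∧ α ≤ a i} ≤ sInf {i | i < κ ∧ β ≤ b i} := by
      by_contra hlt
      push_neg at hlt
      exact absurd (hle.trans hβB) (not_le.2 (hb_smono _ _ hj0 hi0 hlt))
    exact hαA.trans (ha_mono _ _ hi0 hj0 hij)

/-- If `cof p = cof q`, there are maps `π : q → p`, `ρ : p → q` such that `π` maps anything
above `ρ α` to something above `α`. Built from fundamental sequences of common length. -/
theorem transfer_maps (p q : Ordinal) (hc : p.cof = q.cof) :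
    ∃ π ρ : Ordinal → Ordinal,
      (∀ β < q, π β < p) ∧ (∀ α < p, ρ α < q) ∧
      (∀ α < p, ∀ β < q, ρ α ≤ β → α ≤ π β) := by
  obtain ⟨A, hA⟩ := Ordinal.exists_fundamental_sequence p
  obtain ⟨B, hB⟩ := Ordinal.exists_fundamental_sequence q
  have e : q.cof.ord = p.cof.ord := by rw [hc]
  refine transfer_aux p q p.cof.ord
    (fun i => if h : i < p.cof.ord then A i h else 0)
    (fun i => if h : i < p.cof.ord then B i (e ▸ h) else 0)
    ?_ ?_ ?_ ?_ ?_ ?_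
  · intro i hi; simp only [dif_pos hi]; exact hA.lt hi
  · intro i hi; simp only [dif_pos hi]; exact hB.lt _
  · intro i j hi hj hij; simp only [dif_pos hi, dif_pos hj]; exact hA.monotone hi hj hij
  · intro i j hi hj hij; simp only [dif_pos hi, dif_pos hj]; exact hB.strict_mono _ _ hij
  · intro α hα
    rw [← hA.blsub_eq, Ordinal.lt_blsub_iff] at hα
    obtain ⟨i, hi, hle⟩ := hα
    exact ⟨i, hi, by simp only [dif_pos hi]; exact hle⟩
  · intro β hβ
    rw [← hB.blsub_eq, Ordinal.lt_blsub_iff] at hβ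
    obtain ⟨i, hi, hle⟩ := hβ
    have hi' : i < p.cof.ord := by rw [← e]; exact hi
    exact ⟨i, hi', by simp only [dif_pos hi']; exact hle⟩

/-- One direction of the main theorem. -/
theorem cofinalityProd_le_of_cof_eq (f g : ℕ → Ordinal)
    (hcof : ∀ n, (f n).cof = (g n).cof) :
    cofinalityProd f ≤ cofinalityProd g := by
  choose π ρ h1 h2 h3 using fun n => transfer_maps (f n) (g n) (hcof n)
  have hne : {c : Cardinal | ∃ D : Set (ℕ → Ordinal),
      IsCofinalProd g D ∧ Cardinal.mk ↥D = c}.Nonempty := by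
    refine ⟨_, prodBelow g, ⟨subset_rfl, fun h hh => ⟨h, hh, ?_⟩⟩, rfl⟩
    exact Set.Finite.subset Set.finite_empty
      (fun n hn => absurd (Set.mem_setOf_eq ▸ hn) (lt_irrefl _))
  refine le_csInf hne ?_
  rintro c ⟨D, ⟨hD1, hD2⟩, rfl⟩
  set Φ : (ℕ → Ordinal) → (ℕ → Ordinal) := fun h n => π n (h n) with hΦ
  have hcof' : IsCofinalProd f (Φ '' D) := by
    constructor
    · rintro _ ⟨h, hD, rfl⟩ n
      exact h1 n (h n) (hD1 hD n)
    · intro h hh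
      obtain ⟨h', hh', hev⟩ := hD2 (fun n => ρ n (h n)) (fun n => h2 n (h n) (hh n))
      refine ⟨Φ h', ⟨h', hh', rfl⟩, ?_⟩
      refine Set.Finite.subset hev (fun n hn => ?_)
      simp only [Set.mem_setOf_eq] at hn ⊢
      by_contra hle
      push_neg at hle
      exact absurd (h3 n (h n) (hh n) (h' n) (hD1 hh' n) hle) (not_le.2 hn)
  calc cofinalityProd f ≤ Cardinal.mk ↥(Φ '' D) := csInf_le' ⟨Φ '' D, hcof', rfl⟩
    _ ≤ Cardinal.mk ↥D := Cardinal.mk_image_le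

/-- If each `f n`, `g n` is a limit ordinal with `cof (f n) = cof (g n)`, then the
products `∏ f n` and `∏ g n` ordered by eventual dominance have cofinal subsets of the
same minimal cardinality. -/
theorem cofinalityProd_eq_of_cof_eq (f g : ℕ → Ordinal)
    (hf : ∀ n, Order.IsSuccLimit (f n)) (hg : ∀ n, Order.IsSuccLimit (g n))
    (hcof : ∀ n, (f n).cof = (g n).cof) :
    cofinalityProd f = cofinalityProd g :=
  le_antisymm (cofinalityProd_le_of_cof_eq f g hcof)
    (cofinalityProd_le_of_cof_eq g f (fun n => (hcof n).symm))
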